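/- The spectral measurement of Θ = (1/N)∑_{k=1}^N A^{(k)} on H^{⊗N} — i.e., the projection-valued measure given by the eigenprojections of Θ with outcomes the eigenvalues of Θ — is an unbiased estimator of Tr[Aρ] on states ρ^{⊗N}, and its variance equals (Tr[A²ρ] − (Tr[Aρ])²)/N for every density operator ρ. Hence it achieves the minimal variance among all unbiased POVM estimators on H^{⊗N}. -/

import Mathlib

open Matrix BigOperators Finset
open scoped ComplexOrder

/-- N-fold tensor power of a matrix (operator on H^{⊗N} with H = ℂ^d). -/
def tensorPow {d N : ℕ} (ρ : Matrix (Fin d) (Fin d) ℂ) :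
    Matrix (Fin N → Fin d) (Fin N → Fin d) ℂ :=
  Matrix.of fun f g => ∏ i, ρ (f i) (g i)

/-- Conjugation Π_σ X Π_σ† of an operator on H^{⊗N} by the unitary permuting tensor factors. -/
def permAction {d N : ℕ} (σ : Equiv.Perm (Fin N))
    (X : Matrix (Fin N → Fin d) (Fin N → Fin d) ℂ) :
    Matrix (Fin N → Fin d) (Fin N → Fin d) ℂ :=
  Matrix.of fun f g => X (f ∘ σ) (g ∘ σ)

/-- Density operator: positive semidefinite with unit trace. -/
def IsDensity {d : ℕ} (ρ : Matrix (Fin d) (Fin d) ℂ) : Prop :=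
  ρ.PosSemidef ∧ ρ.trace = 1

/-- A^{(k)} = I^{⊗(k-1)} ⊗ A ⊗ I^{⊗(N-k)}, the observable A acting on the k-th factor. -/
noncomputable def siteOp {d N : ℕ} (k : Fin N) (A : Matrix (Fin d) (Fin d) ℂ) :
    Matrix (Fin N → Fin d) (Fin N → Fin d) ℂ :=
  Matrix.of fun f g => A (f k) (g k) * ∏ i ∈ Finset.univ.erase k, (if f i = g i then (1 : ℂ) else 0)

/-- Matrix element ⟨ψ₁|⊗⋯⊗⟨ψ_N| X |φ₁⟩⊗⋯⊗|φ_N⟩ on product vectors. -/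
noncomputable def prodElem {d N : ℕ} (X : Matrix (Fin N → Fin d) (Fin N → Fin d) ℂ)
    (ψ φ : Fin N → Fin d → ℂ) : ℂ :=
  ∑ f : Fin N → Fin d, ∑ g : Fin N → Fin d,
    (starRingEnd ℂ) (∏ i, ψ i (f i)) * X f g * ∏ i, φ i (g i)

namespace Scratch
variable {d N : ℕ}

def kron (M : Fin N → Matrix (Fin d) (Fin d) ℂ) :
    Matrix (Fin N → Fin d) (Fin N → Fin d) ℂ :=
  Matrix.of fun f g => ∏ i, M i (f i) (g i)

lemma kron_apply (M : Fin N → Matrix (Fin d) (Fin d) ℂ) (f g : Fin N → Fin d) :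
    kron M f g = ∏ i, M i (f i) (g i) := rfl

lemma kron_mul (M M' : Fin N → Matrix (Fin d) (Fin d) ℂ) :
    kron M * kron M' = kron (fun i => M i * M' i) := by
  ext f g
  simp only [Matrix.mul_apply, kron_apply]
  rw [Fintype.prod_sum (fun i j => M i (f i) j * M' i j (g i))]
  exact Finset.sum_congr rfl fun h _ => (Finset.prod_mul_distrib).symm

lemma trace_kron (M : Fin N → Matrix (Fin d) (Fin d) ℂ) :
    (kron M).trace = ∏ i, (M i).trace := by
  simp only [Matrix.trace, Matrix.diag, kron_apply]
  rw [Fintype.prod_sum (fun i j => M i j j)]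

lemma tensorPow_eq_kron (ρ : Matrix (Fin d) (Fin d) ℂ) :
    (tensorPow ρ : Matrix (Fin N → Fin d) (Fin N → Fin d) ℂ) = kron (fun _ => ρ) := rfl

lemma siteOp_eq_kron (k : Fin N) (A : Matrix (Fin d) (Fin d) ℂ) :
    siteOp k A = kron (fun i => if i = k then A else 1) := by
  ext f g
  simp only [siteOp, kron_apply, Matrix.of_apply]
  rw [← Finset.mul_prod_erase (a := k) (h := Finset.mem_univ k)]
  simp only [if_pos rfl]
  congr 1
  refine Finset.prod_congr rfl fun i hi => ?_
  rw [if_neg (Finset.mem_erase.mp hi).1]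
  simp [Matrix.one_apply]

open scoped MatrixOrder in
lemma psd_eq_star_mul {n : Type} [Fintype n] [DecidableEq n] {M : Matrix n n ℂ}
    (h : M.PosSemidef) : ∃ B : Matrix n n ℂ, M = Bᴴ * B := by
  obtain ⟨B, hB⟩ := CStarAlgebra.nonneg_iff_eq_star_mul_self.mp h.nonneg
  exact ⟨B, hB⟩

end Scratch

namespace S2
open Scratch
variable {d N : ℕ}

lemma conjTranspose_kron (M : Fin N → Matrix (Fin d) (Fin d) ℂ) :
    (kron M)ᴴ = kron (fun i => (M i)ᴴ) := by
  ext f g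
  simp [kron_apply, Matrix.conjTranspose_apply, map_prod]

lemma tensorPow_posSemidef {ρ : Matrix (Fin d) (Fin d) ℂ} (h : ρ.PosSemidef) :
    (tensorPow ρ : Matrix (Fin N → Fin d) (Fin N → Fin d) ℂ).PosSemidef := by
  obtain ⟨B, hB⟩ := psd_eq_star_mul h
  have : (tensorPow ρ : Matrix (Fin N → Fin d) (Fin N → Fin d) ℂ)
      = (kron (fun _ => B))ᴴ * kron (fun _ => B) := by
    rw [conjTranspose_kron, kron_mul, tensorPow_eq_kron, hB]
  rw [this]
  exact Matrix.posSemidef_conjTranspose_mul_self _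

lemma kron_single_apply (k : Fin N) (C ρ : Matrix (Fin d) (Fin d) ℂ) (f g : Fin N → Fin d) :
    kron (fun i => if i = k then C else ρ) f g
      = C (f k) (g k) * ∏ i ∈ Finset.univ.erase k, ρ (f i) (g i) := by
  rw [kron_apply, ← Finset.mul_prod_erase (a := k) (h := Finset.mem_univ k)]
  simp only [if_pos rfl]
  congr 1
  exact Finset.prod_congr rfl fun i hi => by rw [if_neg (Finset.mem_erase.mp hi).1]

lemma trace_siteOp_mul (k : Fin N) (A ρ : Matrix (Fin d) (Fin d) ℂ) (hρ : ρ.trace = 1) :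
    (siteOp k A * tensorPow ρ).trace = (A * ρ).trace := by
  rw [siteOp_eq_kron, tensorPow_eq_kron, kron_mul, trace_kron,
    ← Finset.mul_prod_erase (a := k) (h := Finset.mem_univ k), if_pos rfl]
  rw [Finset.prod_congr rfl (fun i hi => by
      rw [if_neg (Finset.mem_erase.mp hi).1, Matrix.one_mul, hρ]),
    Finset.prod_const_one, mul_one]

lemma trace_site_site (k l : Fin N) (A B ρ : Matrix (Fin d) (Fin d) ℂ) (hρ : ρ.trace = 1) :
    (siteOp k A * (siteOp l B * tensorPow ρ)).trace =
      if k = l then (A * (B * ρ)).trace else (A * ρ).trace * (B * ρ).trace := by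
  rw [siteOp_eq_kron, siteOp_eq_kron, tensorPow_eq_kron, kron_mul, kron_mul, trace_kron]
  by_cases hkl : k = l
  · subst hkl
    rw [if_pos rfl, ← Finset.mul_prod_erase (a := k) (h := Finset.mem_univ k),
      if_pos rfl, if_pos rfl]
    rw [Finset.prod_congr rfl (fun i hi => by
        have h := (Finset.mem_erase.mp hi).1
        rw [if_neg h, if_neg h, Matrix.one_mul, Matrix.one_mul, hρ]),
      Finset.prod_const_one, mul_one]
  · rw [if_neg hkl]
    have hl : l ∈ Finset.univ.erase k :=
      Finset.mem_erase.mpr ⟨fun h => hkl (h.symm), Finset.mem_univ l⟩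
    rw [← Finset.mul_prod_erase (a := k) (h := Finset.mem_univ k),
      ← Finset.mul_prod_erase (a := l) (h := hl)]
    rw [if_pos rfl, if_neg hkl, if_neg (fun h : l = k => hkl h.symm), if_pos rfl]
    rw [Finset.prod_congr rfl (fun i hi => by
        have hik : i ≠ k := (Finset.mem_erase.mp (Finset.mem_of_mem_erase hi)).1
        have hil : i ≠ l := (Finset.mem_erase.mp hi).1
        rw [if_neg hik, if_neg hil, Matrix.one_mul, Matrix.one_mul, hρ]),
      Finset.prod_const_one, mul_one, Matrix.one_mul, Matrix.one_mul]

end S2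

namespace S3
open Scratch S2
variable {d N : ℕ}

lemma tensorPow_add_smul (ρ C : Matrix (Fin d) (Fin d) ℂ) (t : ℂ) :
    (tensorPow (ρ + t • C) : Matrix (Fin N → Fin d) (Fin N → Fin d) ℂ)
      = ∑ S : Finset (Fin N), t ^ S.card • kron (fun i => if i ∈ S then C else ρ) := by
  ext f g
  simp only [tensorPow, Matrix.of_apply, Matrix.sum_apply, Matrix.smul_apply, kron_apply,
    Matrix.add_apply, smul_eq_mul]
  rw [Finset.prod_congr rfl (fun i _ => add_comm (ρ (f i) (g i)) (t * C (f i) (g i))),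
    Fintype.prod_add]
  refine Finset.sum_congr rfl fun S _ => ?_
  have hite : ∀ i : Fin N, (if i ∈ S then C else ρ) (f i) (g i)
      = if i ∈ S then C (f i) (g i) else ρ (f i) (g i) := fun i => by split_ifs <;> rfl
  rw [Finset.prod_congr rfl (fun i _ => hite i),
    ← Finset.prod_mul_prod_compl S (fun i => if i ∈ S then C (f i) (g i) else ρ (f i) (g i)),
    Finset.prod_congr rfl (fun i hi => if_pos hi),
    Finset.prod_congr (rfl : Sᶜ = Sᶜ) (fun i hi => if_neg (Finset.mem_compl.mp hi)),
    Finset.prod_mul_distrib, Finset.prod_const]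
  ring

end S3

namespace S4
open Scratch S2 S3
variable {d N : ℕ}

lemma slot_sum_zero (D : Matrix (Fin N → Fin d) (Fin N → Fin d) ℂ) (ρ C : Matrix (Fin d) (Fin d) ℂ)
    (h : ∀ t : ℝ, 0 ≤ t → (D * tensorPow (ρ + (t : ℂ) • C)).trace = 0) :
    ∑ k : Fin N, (D * kron (fun i => if i = k then C else ρ)).trace = 0 := by
  set c : Finset (Fin N) → ℂ := fun S => (D * kron (fun i => if i ∈ S then C else ρ)).trace with hc
  set p : Polynomial ℂ := ∑ S : Finset (Fin N), Polynomial.C (c S) * Polynomial.X ^ S.card with hp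
  have heval : ∀ t : ℂ, p.eval t = (D * tensorPow (ρ + t • C)).trace := by
    intro t
    rw [tensorPow_add_smul, Matrix.mul_sum, Matrix.trace_sum, hp]
    rw [Polynomial.eval_finset_sum]
    refine Finset.sum_congr rfl fun S _ => ?_
    rw [Matrix.mul_smul, Matrix.trace_smul, Polynomial.eval_mul, Polynomial.eval_C,
      Polynomial.eval_pow, Polynomial.eval_X, smul_eq_mul, mul_comm]
  have hp0 : p = 0 := by
    apply Polynomial.eq_zero_of_infinite_isRoot
    apply Set.Infinite.mono (s := (fun t : ℝ => (t : ℂ)) '' Set.Ici 0)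
    · rintro x ⟨t, ht, rfl⟩
      show p.IsRoot t
      rw [Polynomial.IsRoot, heval]
      exact h t ht
    · exact Set.Infinite.image (Set.injOn_of_injective Complex.ofReal_injective)
        (Set.Ici_infinite 0)
  have hco : p.coeff 1 = ∑ S : Finset (Fin N), c S * (if (1 : ℕ) = S.card then 1 else 0) := by
    rw [hp, Polynomial.finset_sum_coeff]
    exact Finset.sum_congr rfl fun S _ => by
      rw [Polynomial.coeff_C_mul, Polynomial.coeff_X_pow]
  have hzero : ∑ S : Finset (Fin N), c S * (if (1 : ℕ) = S.card then 1 else 0) = 0 := by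
    rw [← hco, hp0, Polynomial.coeff_zero]
  have himg : (Finset.univ.filter (fun S : Finset (Fin N) => 1 = S.card))
      = Finset.univ.image (fun k : Fin N => ({k} : Finset (Fin N))) := by
    ext S
    simp only [Finset.mem_filter, Finset.mem_univ, true_and, Finset.mem_image]
    constructor
    · intro hS
      obtain ⟨a, ha⟩ := Finset.card_eq_one.mp hS.symm
      exact ⟨a, ha.symm⟩
    · rintro ⟨a, _, rfl⟩
      simp
  have hsing : ∑ S : Finset (Fin N), c S * (if (1 : ℕ) = S.card then 1 else 0)
      = ∑ k : Fin N, c {k} := by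
    simp only [mul_ite, mul_one, mul_zero]
    rw [← Finset.sum_filter, himg,
      Finset.sum_image (fun a _ b _ h => Finset.singleton_injective h)]
  have hfin : ∀ k : Fin N, (D * kron fun i => if i = k then C else ρ).trace = c {k} := by
    intro k
    rw [hc]
    congr 2
    funext i
    simp
  rw [Finset.sum_congr rfl fun k _ => hfin k, ← hsing]
  exact hzero

end S4

namespace S5
open Scratch S2 S3 S4
variable {d N : ℕ}

lemma psd_real_smul {n : ℕ} {C : Matrix (Fin n) (Fin n) ℂ} (hC : C.PosSemidef)
    {t : ℝ} (ht : 0 ≤ t) : ((t : ℂ) • C).PosSemidef := by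
  refine Matrix.PosSemidef.of_dotProduct_mulVec_nonneg ?_ ?_
  · rw [Matrix.IsHermitian, Matrix.conjTranspose_smul, hC.1.eq]
    congr 1
    simp [Complex.ext_iff]
  · intro x
    rw [Matrix.smul_mulVec, dotProduct_smul, smul_eq_mul]
    exact mul_nonneg (by exact_mod_cast Complex.zero_le_real.mpr ht) (hC.dotProduct_mulVec_nonneg x)

lemma psd_diag_nonneg {n : ℕ} {C : Matrix (Fin n) (Fin n) ℂ} (hC : C.PosSemidef) (i : Fin n) :
    0 ≤ C i i := by
  have := hC.dotProduct_mulVec_nonneg (Pi.single i 1)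
  simpa [Matrix.mulVec_single, dotProduct, Pi.single_apply, Finset.sum_ite_eq] using this

lemma psd_trace_nonneg {n : ℕ} {C : Matrix (Fin n) (Fin n) ℂ} (hC : C.PosSemidef) :
    0 ≤ C.trace :=
  Finset.sum_nonneg fun i _ => psd_diag_nonneg hC i

lemma trace_mul_psd_nonneg {n : Type} [Fintype n] [DecidableEq n]
    {S T : Matrix n n ℂ} (hS : S.PosSemidef) (hT : T.PosSemidef) :
    0 ≤ (S * T).trace := by
  obtain ⟨B, rfl⟩ := psd_eq_star_mul hS
  rw [Matrix.mul_assoc, Matrix.trace_mul_comm]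
  have hpsd := hT.mul_mul_conjTranspose_same B
  exact Finset.sum_nonneg fun i _ => by
    have := hpsd.dotProduct_mulVec_nonneg (Pi.single i 1)
    simpa [Matrix.mulVec_single, dotProduct, Pi.single_apply] using this

lemma tensorPow_smul (c : ℂ) (ρ : Matrix (Fin d) (Fin d) ℂ) :
    (tensorPow (c • ρ) : Matrix (Fin N → Fin d) (Fin N → Fin d) ℂ)
      = c ^ N • tensorPow ρ := by
  ext f g
  simp only [tensorPow, Matrix.of_apply, Matrix.smul_apply, smul_eq_mul]
  rw [Finset.prod_mul_distrib, Finset.prod_const, Finset.card_univ, Fintype.card_fin]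

lemma trace_herm_mul_real {n : Type} [Fintype n]
    {X Y : Matrix n n ℂ} (hX : X.IsHermitian) (hY : Y.IsHermitian) :
    ((X * Y).trace) = (((X * Y).trace.re : ℝ) : ℂ) := by
  have h1 : (starRingEnd ℂ) ((X * Y).trace) = (X * Y).trace := by
    have : ((X * Y)ᴴ).trace = (starRingEnd ℂ) ((X * Y).trace) := by
      rw [Matrix.trace_conjTranspose]
      rfl
    rw [← this, Matrix.conjTranspose_mul, hX.eq, hY.eq, Matrix.trace_mul_comm]
  exact ((Complex.conj_eq_iff_re).mp h1).symm ▸ rfl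

end S5

namespace S6
open Scratch S2 S3 S4 S5
variable {d : ℕ}

noncomputable def outer (v : Fin d → ℂ) : Matrix (Fin d) (Fin d) ℂ :=
  Matrix.vecMulVec v (star v)

lemma outer_posSemidef (v : Fin d → ℂ) : (outer v).PosSemidef := by
  refine Matrix.PosSemidef.of_dotProduct_mulVec_nonneg ?_ ?_
  · ext x y
    simp [outer, Matrix.conjTranspose_apply, Matrix.vecMulVec_apply, mul_comm]
  · intro x
    have h1 : (outer v) *ᵥ x = fun i => v i * (star v ⬝ᵥ x) := by
      funext i
      simp [outer, Matrix.mulVec, Matrix.vecMulVec_apply, dotProduct, Finset.mul_sum,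
        mul_assoc]
    rw [h1]
    have h2 : star x ⬝ᵥ (fun i => v i * (star v ⬝ᵥ x)) = (star x ⬝ᵥ v) * (star v ⬝ᵥ x) := by
      simp [dotProduct, Finset.sum_mul, mul_assoc]
    rw [h2]
    have h3 : star v ⬝ᵥ x = (starRingEnd ℂ) (star x ⬝ᵥ v) := by
      simp [dotProduct, map_sum, mul_comm]
    rw [h3, Complex.mul_conj]
    exact_mod_cast Complex.zero_le_real.mpr (Complex.normSq_nonneg _)

noncomputable def evec (a : Fin d) : Fin d → ℂ := fun x => if x = a then 1 else 0

lemma evec_star (c z : Fin d) : star (evec c z) = evec c z := by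
  simp only [evec]
  split_ifs <;> simp

lemma std_combo (a b : Fin d) :
    Matrix.single a b (1 : ℂ)
      = (4⁻¹ : ℂ) • outer (evec a + evec b)
        + (-(4⁻¹) : ℂ) • outer (evec a - evec b)
        + (Complex.I / 4) • outer (evec a + Complex.I • evec b)
        + (-(Complex.I / 4)) • outer (evec a - Complex.I • evec b) := by
  ext x y
  have hstd : Matrix.single a b (1 : ℂ) x y = evec a x * evec b y := by
    simp only [Matrix.single, Matrix.of_apply, evec]
    by_cases h1 : x = a <;> by_cases h2 : y = b <;>
      simp [h1, h2] <;>
        (intro h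
         first
           | exact h1 h.symm
           | exact h2 h.symm
           | (intro h'; exact h2 h'.symm))
  simp only [Matrix.add_apply, Matrix.smul_apply, smul_eq_mul, outer, Matrix.vecMulVec_apply,
    Pi.star_apply, Pi.add_apply, Pi.sub_apply, Pi.smul_apply, star_add, star_sub, star_mul',
    evec_star, Complex.star_def, Complex.conj_I, hstd]
  ring_nf
  rw [Complex.I_sq]
  ring

end S6

namespace S7
open Scratch S2 S3 S4 S5 S6
variable {d N : ℕ}

lemma lin_ext (L : Matrix (Fin d) (Fin d) ℂ →+ ℂ)
    (hsmul : ∀ (c : ℂ) (X : Matrix (Fin d) (Fin d) ℂ), L (c • X) = c * L X)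
    (houter : ∀ v : Fin d → ℂ, L (outer v) = 0) :
    ∀ C : Matrix (Fin d) (Fin d) ℂ, L C = 0 := by
  have hstd : ∀ a b : Fin d, L (Matrix.single a b (1 : ℂ)) = 0 := by
    intro a b
    rw [std_combo, map_add, map_add, map_add, hsmul, hsmul, hsmul, hsmul,
      houter, houter, houter, houter]
    ring
  intro C
  rw [Matrix.matrix_eq_sum_single C, map_sum]
  rw [Finset.sum_congr rfl fun a _ => map_sum L _ Finset.univ]
  rw [Finset.sum_congr rfl fun a _ => Finset.sum_congr rfl fun b _ => by
    have h1 : Matrix.single a b (C a b) = (C a b) • Matrix.single a b (1 : ℂ) := by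
      rw [Matrix.smul_single, smul_eq_mul, mul_one]
    rw [h1, hsmul, hstd, mul_zero]]
  simp

lemma L_explicit (D : Matrix (Fin N → Fin d) (Fin N → Fin d) ℂ)
    (ρ C : Matrix (Fin d) (Fin d) ℂ) :
    ∑ k : Fin N, (D * kron (fun i => if i = k then C else ρ)).trace
      = ∑ k : Fin N, ∑ f : Fin N → Fin d, ∑ g : Fin N → Fin d,
          D f g * (C (g k) (f k) * ∏ i ∈ Finset.univ.erase k, ρ (g i) (f i)) := by
  refine Finset.sum_congr rfl fun k _ => ?_
  simp only [Matrix.trace, Matrix.diag, Matrix.mul_apply, kron_single_apply]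

lemma slot_sum_zero_all (D : Matrix (Fin N → Fin d) (Fin N → Fin d) ℂ)
    (ρ : Matrix (Fin d) (Fin d) ℂ) (hρ : ρ.PosSemidef) (hρtr : ρ.trace = 1)
    (hD : ∀ σ : Matrix (Fin d) (Fin d) ℂ, σ.PosSemidef → σ.trace = 1 →
      (D * tensorPow σ).trace = 0) :
    ∀ C : Matrix (Fin d) (Fin d) ℂ,
      ∑ k : Fin N, (D * kron (fun i => if i = k then C else ρ)).trace = 0 := by
  have hPSD : ∀ σ : Matrix (Fin d) (Fin d) ℂ, σ.PosSemidef → 0 < σ.trace.re →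
      (D * tensorPow σ).trace = 0 := by
    intro σ hσ h0
    have htr : σ.trace = ((σ.trace.re : ℝ) : ℂ) := by
      have := Complex.nonneg_iff.mp (psd_trace_nonneg hσ)
      exact Complex.ext rfl this.2.symm
    set c : ℝ := σ.trace.re with hc
    have hc0 : c ≠ 0 := ne_of_gt h0
    have hσ' : ((c⁻¹ : ℝ) : ℂ) • σ = (((c : ℝ)⁻¹ : ℂ)) • σ := by norm_num
    have hPSD' : (((c⁻¹ : ℝ) : ℂ) • σ).PosSemidef := psd_real_smul hσ (inv_nonneg.mpr (le_of_lt h0))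
    have htr' : (((c⁻¹ : ℝ) : ℂ) • σ).trace = 1 := by
      rw [Matrix.trace_smul, htr, smul_eq_mul, ← Complex.ofReal_mul, inv_mul_cancel₀ hc0,
        Complex.ofReal_one]
    have hback : σ = ((c : ℝ) : ℂ) • (((c⁻¹ : ℝ) : ℂ) • σ) := by
      rw [smul_smul, ← Complex.ofReal_mul, mul_inv_cancel₀ hc0, Complex.ofReal_one, one_smul]
    calc (D * tensorPow σ).trace
        = (D * tensorPow (((c : ℝ) : ℂ) • (((c⁻¹ : ℝ) : ℂ) • σ))).trace := by rw [← hback]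
      _ = ((c : ℝ) : ℂ) ^ N * (D * tensorPow (((c⁻¹ : ℝ) : ℂ) • σ)).trace := by
          rw [tensorPow_smul, Matrix.mul_smul, Matrix.trace_smul, smul_eq_mul]
      _ = 0 := by rw [hD _ hPSD' htr', mul_zero]
  have hL : ∀ C : Matrix (Fin d) (Fin d) ℂ, C.PosSemidef →
      ∑ k : Fin N, (D * kron (fun i => if i = k then C else ρ)).trace = 0 := by
    intro C hC
    apply slot_sum_zero
    intro t ht
    apply hPSD
    · exact hρ.add (psd_real_smul hC ht)
    · rw [Matrix.trace_add, Matrix.trace_smul, hρtr, smul_eq_mul]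
      have h1 : 0 ≤ (C.trace).re := (Complex.nonneg_iff.mp (psd_trace_nonneg hC)).1
      simp only [Complex.add_re, Complex.one_re, Complex.mul_re, Complex.ofReal_re,
        Complex.ofReal_im, zero_mul, sub_zero]
      nlinarith [mul_nonneg ht h1, (Complex.nonneg_iff.mp (psd_trace_nonneg hC)).2]
  -- build the additive map
  let L : Matrix (Fin d) (Fin d) ℂ →+ ℂ := AddMonoidHom.mk'
    (fun C => ∑ k : Fin N, (D * kron (fun i => if i = k then C else ρ)).trace)
    (by
      intro X Y
      simp only [L_explicit, Matrix.add_apply, add_mul, mul_add, Finset.sum_add_distrib])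
  have hsmul : ∀ (c : ℂ) (X : Matrix (Fin d) (Fin d) ℂ), L (c • X) = c * L X := by
    intro c X
    show (∑ k : Fin N, _) = c * ∑ k : Fin N, _
    simp only [L_explicit, Matrix.smul_apply, smul_eq_mul, Finset.mul_sum]
    exact Finset.sum_congr rfl fun k _ => Finset.sum_congr rfl fun f _ =>
      Finset.sum_congr rfl fun g _ => by ring
  exact lin_ext L hsmul (fun v => hL (outer v) (outer_posSemidef v))

end S7

namespace S8
open Scratch S2 S3 S4 S5 S6 S7
variable {d N : ℕ}

lemma siteOp_mul_tensorPow (k : Fin N) (A ρ : Matrix (Fin d) (Fin d) ℂ) :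
    siteOp k A * tensorPow ρ = kron (fun i => if i = k then A * ρ else ρ) := by
  rw [siteOp_eq_kron, tensorPow_eq_kron, kron_mul]
  have h : (fun i => (if i = k then A else 1) * ρ) = fun i => if i = k then A * ρ else ρ := by
    funext i; split_ifs <;> simp
  rw [h]

lemma tensorPow_mul_siteOp (k : Fin N) (A ρ : Matrix (Fin d) (Fin d) ℂ) :
    tensorPow ρ * siteOp k A = kron (fun i => if i = k then ρ * A else ρ) := by
  rw [siteOp_eq_kron, tensorPow_eq_kron, kron_mul]
  have h : (fun i => ρ * (if i = k then A else 1)) = fun i => if i = k then ρ * A else ρ := by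
    funext i; split_ifs <;> simp
  rw [h]

lemma trace_theta_mul (hN : 0 < N) (A ρ : Matrix (Fin d) (Fin d) ℂ) (hρtr : ρ.trace = 1) :
    ((((N : ℂ)⁻¹ • ∑ k : Fin N, siteOp k A) : Matrix (Fin N → Fin d) (Fin N → Fin d) ℂ)
      * tensorPow ρ).trace = (A * ρ).trace := by
  have hNC : (N : ℂ) ≠ 0 := Nat.cast_ne_zero.mpr hN.ne'
  rw [Matrix.smul_mul, Matrix.trace_smul, Matrix.sum_mul, Matrix.trace_sum,
    Finset.sum_congr rfl fun k _ => trace_siteOp_mul k A ρ hρtr,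
    Finset.sum_const, Finset.card_univ, Fintype.card_fin, nsmul_eq_mul, smul_eq_mul]
  field_simp

lemma trace_theta_sq (hN : 0 < N) (A ρ : Matrix (Fin d) (Fin d) ℂ) (hρtr : ρ.trace = 1) :
    ((((N : ℂ)⁻¹ • ∑ k : Fin N, siteOp k A) : Matrix (Fin N → Fin d) (Fin N → Fin d) ℂ)
      * ((((N : ℂ)⁻¹ • ∑ k : Fin N, siteOp k A)) * tensorPow ρ)).trace
      = (A * ρ).trace ^ 2 + ((A * A * ρ).trace - (A * ρ).trace ^ 2) / (N : ℂ) := by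
  have hNC : (N : ℂ) ≠ 0 := Nat.cast_ne_zero.mpr hN.ne'
  set a : ℂ := (A * A * ρ).trace with ha
  set b : ℂ := (A * ρ).trace with hb
  have hkl : ∀ k l : Fin N, (siteOp k A * (siteOp l A * tensorPow ρ)).trace
      = if k = l then a else b * b := by
    intro k l
    rw [trace_site_site k l A A ρ hρtr, ← Matrix.mul_assoc]
  have hsum2 : ∑ k : Fin N, ∑ l : Fin N, (siteOp k A * (siteOp l A * tensorPow ρ)).trace
      = (N : ℂ) * a + ((N : ℂ) * (N : ℂ) - (N : ℂ)) * (b * b) := by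
    rw [Finset.sum_congr rfl fun k _ => Finset.sum_congr rfl fun l _ => hkl k l]
    have hrow : ∀ k : Fin N, ∑ l : Fin N, (if k = l then a else b * b)
        = (a - b * b) + (N : ℂ) * (b * b) := by
      intro k
      rw [Finset.sum_congr rfl fun l _ => (by split_ifs <;> ring :
          (if k = l then a else b * b) = (if k = l then a - b * b else 0) + b * b),
        Finset.sum_add_distrib, Finset.sum_ite_eq Finset.univ k (fun _ => a - b * b),
        if_pos (Finset.mem_univ k), Finset.sum_const, Finset.card_univ, Fintype.card_fin,
        nsmul_eq_mul]
    rw [Finset.sum_congr rfl fun k _ => hrow k, Finset.sum_const, Finset.card_univ,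
      Fintype.card_fin, nsmul_eq_mul]
    ring
  rw [Matrix.smul_mul, Matrix.trace_smul, Matrix.sum_mul, Matrix.trace_sum, smul_eq_mul]
  rw [Finset.sum_congr rfl fun k _ => congrArg Matrix.trace (by
    rw [Matrix.smul_mul, Matrix.mul_smul, Matrix.sum_mul, Matrix.mul_sum] :
    siteOp k A * (((N : ℂ)⁻¹ • ∑ l : Fin N, siteOp l A) * tensorPow ρ)
      = (N : ℂ)⁻¹ • ∑ l : Fin N, siteOp k A * (siteOp l A * tensorPow ρ))]
  simp only [Matrix.trace_smul, smul_eq_mul, Matrix.trace_sum]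
  rw [← Finset.mul_sum, hsum2]
  field_simp
  ring

end S8

namespace S9
open Scratch S2 S3 S4 S5 S6 S7 S8

lemma re_sum_sq {κ : Type*} [Fintype κ] (c : κ → ℝ) (Z : κ → ℂ) :
    (∑ i, ((c i : ℂ)) ^ 2 * Z i).re = ∑ i, (c i) ^ 2 * (Z i).re := by
  rw [Complex.re_sum]
  exact Finset.sum_congr rfl fun i _ => by
    rw [← Complex.ofReal_pow, Complex.re_ofReal_mul]

end S9

open Scratch S2 S3 S4 S5 S6 S7 S8 S9 in
/-- The spectral measurement of Θ = (1/N)∑_k A^{(k)} (PVM of eigenprojections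
with outcomes the eigenvalues) is unbiased for Tr[Aρ] on ρ^{⊗N}, has variance
(Tr[A²ρ] − (Tr[Aρ])²)/N, and achieves the minimum variance among all unbiased POVMs. -/
theorem spectral_measurement_of_theta_optimal
    {d N : ℕ} (hN : 0 < N)
    (A : Matrix (Fin d) (Fin d) ℂ) (hA : A.IsHermitian)
    {ι : Type} [Fintype ι]
    (P : ι → Matrix (Fin N → Fin d) (Fin N → Fin d) ℂ) (r : ι → ℝ)
    (hproj : ∀ i, (P i).IsHermitian ∧ P i * P i = P i)
    (horth : ∀ i j, i ≠ j → P i * P j = 0)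
    (hsum : ∑ i, P i = 1)
    (hspec : ((N : ℂ)⁻¹ • ∑ k : Fin N, siteOp k A) = ∑ i, (r i : ℂ) • P i)
    (hinj : Function.Injective r) :
    (∀ ρ : Matrix (Fin d) (Fin d) ℂ, IsDensity ρ →
      ∑ i, (r i : ℂ) * (P i * tensorPow ρ).trace = (A * ρ).trace) ∧
    (∀ ρ : Matrix (Fin d) (Fin d) ℂ, IsDensity ρ →
      (∑ i, (r i) ^ 2 * ((P i * tensorPow ρ).trace).re) - (((A * ρ).trace).re) ^ 2 =
        (((A * A * ρ).trace).re - (((A * ρ).trace).re) ^ 2) / N) ∧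
    (∀ (κ : Type) (_ : Fintype κ)
        (Q : κ → Matrix (Fin N → Fin d) (Fin N → Fin d) ℂ) (s : κ → ℝ),
      (∀ i, (Q i).PosSemidef) → (∑ i, Q i = 1) →
      (∀ ρ : Matrix (Fin d) (Fin d) ℂ, IsDensity ρ →
        ∑ i, (s i : ℂ) * (Q i * tensorPow ρ).trace = (A * ρ).trace) →
      ∀ ρ : Matrix (Fin d) (Fin d) ℂ, IsDensity ρ →
        (∑ i, (s i) ^ 2 * ((Q i * tensorPow ρ).trace).re) - (((A * ρ).trace).re) ^ 2 ≥
          (∑ i, (r i) ^ 2 * ((P i * tensorPow ρ).trace).re) - (((A * ρ).trace).re) ^ 2) 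
:= by
  classical
  have hNC : (N : ℂ) ≠ 0 := Nat.cast_ne_zero.mpr hN.ne'
  have hAA : (A * A).IsHermitian := by
    show (A * A)ᴴ = A * A
    rw [Matrix.conjTranspose_mul, hA.eq]
  have hP1 : ∀ ρ : Matrix (Fin d) (Fin d) ℂ, IsDensity ρ →
      ∑ i, (r i : ℂ) * (P i * tensorPow ρ).trace = (A * ρ).trace := by
    intro ρ hρ
    have h1 : ((N : ℂ)⁻¹ • ∑ k : Fin N, siteOp k A) * tensorPow ρ
        = ∑ i, (r i : ℂ) • (P i * tensorPow ρ) := by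
      rw [hspec, Matrix.sum_mul]
      exact Finset.sum_congr rfl fun i _ => Matrix.smul_mul _ _ _
    have h2 := trace_theta_mul hN A ρ hρ.2
    rw [h1, Matrix.trace_sum] at h2
    rw [← h2]
    exact Finset.sum_congr rfl fun i _ => by rw [Matrix.trace_smul, smul_eq_mul]
  have hΘsq : (((N : ℂ)⁻¹ • ∑ k : Fin N, siteOp k A) :
        Matrix (Fin N → Fin d) (Fin N → Fin d) ℂ) * ((N : ℂ)⁻¹ • ∑ k : Fin N, siteOp k A)
      = ∑ i, ((r i : ℂ)) ^ 2 • P i := by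
    rw [hspec, Finset.sum_mul]
    refine Finset.sum_congr rfl fun i _ => ?_
    rw [Matrix.smul_mul, Matrix.mul_sum]
    have h3 : ∑ j, P i * ((r j : ℂ) • P j) = (r i : ℂ) • (P i) := by
      rw [Finset.sum_eq_single i
        (fun j _ hji => by rw [Matrix.mul_smul, horth i j (fun h => hji h.symm), smul_zero])
        (fun h => absurd (Finset.mem_univ i) h)]
      rw [Matrix.mul_smul, (hproj i).2]
    rw [h3, smul_smul, ← pow_two]
  have hP2c : ∀ ρ : Matrix (Fin d) (Fin d) ℂ, IsDensity ρ →
      ∑ i, ((r i : ℂ)) ^ 2 * (P i * tensorPow ρ).trace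
        = (A * ρ).trace ^ 2 + ((A * A * ρ).trace - (A * ρ).trace ^ 2) / (N : ℂ) := by
    intro ρ hρ
    have h2 := trace_theta_sq hN A ρ hρ.2
    rw [← Matrix.mul_assoc, hΘsq, Matrix.sum_mul, Matrix.trace_sum] at h2
    rw [← h2]
    exact Finset.sum_congr rfl fun i _ => by rw [Matrix.smul_mul, Matrix.trace_smul, smul_eq_mul]
  refine ⟨hP1, ?_, ?_⟩
  · -- Part 2
    intro ρ hρ
    have hx : (A * ρ).trace = (((A * ρ).trace.re : ℝ) : ℂ) := trace_herm_mul_real hA hρ.1.1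
    have hy : (A * A * ρ).trace = (((A * A * ρ).trace.re : ℝ) : ℂ) :=
      trace_herm_mul_real hAA hρ.1.1
    set x : ℝ := (A * ρ).trace.re
    set y : ℝ := (A * A * ρ).trace.re
    have hrhs : ((A * ρ).trace ^ 2 + ((A * A * ρ).trace - (A * ρ).trace ^ 2) / (N : ℂ)).re
        = x ^ 2 + (y - x ^ 2) / (N : ℝ) := by
      rw [hx, hy]
      have h4 : (((x : ℝ) : ℂ)) ^ 2 + (((y : ℝ) : ℂ) - ((x : ℝ) : ℂ) ^ 2) / ((N : ℕ) : ℂ)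
          = (((x ^ 2 + (y - x ^ 2) / (N : ℝ) : ℝ)) : ℂ) := by
        push_cast
        ring
      rw [h4, Complex.ofReal_re]
    have hstep : ∑ i, (r i) ^ 2 * ((P i * tensorPow ρ).trace).re
        = x ^ 2 + (y - x ^ 2) / (N : ℝ) := by
      have h1 : ∑ i, (r i) ^ 2 * ((P i * tensorPow ρ).trace).re
          = (∑ i, ((r i : ℂ)) ^ 2 * (P i * tensorPow ρ).trace).re := by
        rw [Complex.re_sum]
        exact Finset.sum_congr rfl fun i _ => by
          rw [← Complex.ofReal_pow, Complex.re_ofReal_mul]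
      rw [h1, hP2c ρ hρ, hrhs]
    rw [hstep]
    ring
  · -- Part 3
    intro κ _ Q s hQpsd hQsum hQunb ρ hρ
    set τ : Matrix (Fin N → Fin d) (Fin N → Fin d) ℂ := tensorPow ρ with hτdef
    set Θ : Matrix (Fin N → Fin d) (Fin N → Fin d) ℂ :=
      (N : ℂ)⁻¹ • ∑ k : Fin N, siteOp k A with hΘdef
    set E : Matrix (Fin N → Fin d) (Fin N → Fin d) ℂ := ∑ i, (s i : ℂ) • Q i with hEdef
    have hEτ : ∀ σ : Matrix (Fin d) (Fin d) ℂ, IsDensity σ →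
        (E * tensorPow σ).trace = (A * σ).trace := by
      intro σ hσ
      rw [hEdef, Matrix.sum_mul, Matrix.trace_sum, ← hQunb σ hσ]
      exact Finset.sum_congr rfl fun i _ => by
        rw [Matrix.smul_mul, Matrix.trace_smul, smul_eq_mul]
    have hDzero : ∀ σ : Matrix (Fin d) (Fin d) ℂ, σ.PosSemidef → σ.trace = 1 →
        ((E - Θ) * tensorPow σ).trace = 0 := by
      intro σ h1 h2
      rw [Matrix.sub_mul, Matrix.trace_sub, hEτ σ ⟨h1, h2⟩, hΘdef,
        trace_theta_mul hN A σ h2, sub_self]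
    have hPol := slot_sum_zero_all (E - Θ) ρ hρ.1 hρ.2 hDzero
    have hΘτ : Θ * τ = (N : ℂ)⁻¹ • ∑ k : Fin N, kron (fun i => if i = k then A * ρ else ρ) := by
      rw [hΘdef, hτdef, Matrix.smul_mul, Matrix.sum_mul]
      congr 1
      exact Finset.sum_congr rfl fun k _ => siteOp_mul_tensorPow k A ρ
    have hτΘ : τ * Θ = (N : ℂ)⁻¹ • ∑ k : Fin N, kron (fun i => if i = k then ρ * A else ρ) := by
      rw [hΘdef, hτdef, Matrix.mul_smul, Matrix.mul_sum]
      congr 1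
      exact Finset.sum_congr rfl fun k _ => tensorPow_mul_siteOp k A ρ
    have hclaim1 : ((E - Θ) * (Θ * τ)).trace = 0 := by
      rw [hΘτ, Matrix.mul_smul, Matrix.trace_smul, Matrix.mul_sum, Matrix.trace_sum,
        hPol (A * ρ), smul_zero]
    have hclaim2 : ((E - Θ) * (τ * Θ)).trace = 0 := by
      rw [hτΘ, Matrix.mul_smul, Matrix.trace_smul, Matrix.mul_sum, Matrix.trace_sum,
        hPol (ρ * A), smul_zero]
    have hΘH : Θᴴ = Θ := by
      rw [hspec, Matrix.conjTranspose_sum]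
      refine Finset.sum_congr rfl fun i _ => ?_
      rw [Matrix.conjTranspose_smul, (hproj i).1.eq, Complex.star_def, Complex.conj_ofReal]
    set M : κ → Matrix (Fin N → Fin d) (Fin N → Fin d) ℂ :=
      fun i => (s i : ℂ) • 1 - Θ with hMdef
    have hMH : ∀ i, (M i)ᴴ = M i := by
      intro i
      rw [hMdef]
      rw [Matrix.conjTranspose_sub, Matrix.conjTranspose_smul, hΘH,
        Matrix.conjTranspose_one, Complex.star_def, Complex.conj_ofReal]
    have hRpsd : (∑ i, M i * Q i * M i).PosSemidef := by
      refine Finset.sum_induction _ _ (fun a b ha hb => ha.add hb) Matrix.PosSemidef.zero ?_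
      intro i _
      have h5 := (hQpsd i).mul_mul_conjTranspose_same (M i)
      rwa [hMH i] at h5
    have hterm : ∀ i, M i * Q i * M i
        = ((s i : ℂ)) ^ 2 • Q i - (s i : ℂ) • (Q i * Θ) - (s i : ℂ) • (Θ * Q i)
          + Θ * Q i * Θ := by
      intro i
      rw [hMdef]
      simp only [Matrix.sub_mul, Matrix.mul_sub, Matrix.smul_mul, Matrix.mul_smul,
        Matrix.one_mul, Matrix.mul_one, smul_sub, smul_smul, ← pow_two]
      abel
    have hsum_eq : ∑ i, M i * Q i * M i
        = (∑ i, ((s i : ℂ)) ^ 2 • Q i) - E * Θ - Θ * E + Θ * Θ := by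
      rw [Finset.sum_congr rfl fun i _ => hterm i, Finset.sum_add_distrib,
        Finset.sum_sub_distrib, Finset.sum_sub_distrib]
      have e1 : ∑ i, (s i : ℂ) • (Q i * Θ) = E * Θ := by
        rw [hEdef, Matrix.sum_mul]
        exact Finset.sum_congr rfl fun i _ => by rw [Matrix.smul_mul]
      have e2 : ∑ i, (s i : ℂ) • (Θ * Q i) = Θ * E := by
        rw [hEdef, Matrix.mul_sum]
        exact Finset.sum_congr rfl fun i _ => by rw [Matrix.mul_smul]
      have e3 : ∑ i, Θ * Q i * Θ = Θ * Θ := by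
        rw [← Matrix.sum_mul, ← Matrix.mul_sum, hQsum, Matrix.mul_one]
      rw [e1, e2, e3]
    have hEΘτ : (E * (Θ * τ)).trace = (Θ * (Θ * τ)).trace := by
      have h6 := hclaim1
      rw [Matrix.sub_mul, Matrix.trace_sub] at h6
      linear_combination h6
    have hΘEτ : (Θ * E * τ).trace = (Θ * Θ * τ).trace := by
      have hcyc : (Θ * E * τ).trace = (E * (τ * Θ)).trace := by
        rw [Matrix.trace_mul_cycle, Matrix.trace_mul_comm]
      have hcyc2 : (Θ * (τ * Θ)).trace = (Θ * Θ * τ).trace := by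
        rw [← Matrix.mul_assoc, Matrix.trace_mul_cycle]
      have h6 := hclaim2
      rw [Matrix.sub_mul, Matrix.trace_sub] at h6
      rw [hcyc, ← hcyc2]
      linear_combination h6
    have hmain : ∑ i, ((s i : ℂ)) ^ 2 * (Q i * τ).trace
        = ((∑ i, M i * Q i * M i) * τ).trace + (Θ * Θ * τ).trace := by
      rw [hsum_eq]
      rw [Matrix.add_mul, Matrix.sub_mul, Matrix.sub_mul, Matrix.trace_add, Matrix.trace_sub,
        Matrix.trace_sub, Matrix.sum_mul, Matrix.trace_sum]
      have e4 : ∑ i, (((s i : ℂ)) ^ 2 • Q i * τ).trace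
          = ∑ i, ((s i : ℂ)) ^ 2 * (Q i * τ).trace :=
        Finset.sum_congr rfl fun i _ => by
          rw [Matrix.smul_mul, Matrix.trace_smul, smul_eq_mul]
      have e5 : (E * Θ * τ).trace = (Θ * Θ * τ).trace := by
        rw [Matrix.mul_assoc, Matrix.mul_assoc]
        exact hEΘτ
      rw [e4, e5, hΘEτ]
      ring
    have hpos : 0 ≤ ((∑ i, M i * Q i * M i) * τ).trace.re := by
      have h7 := trace_mul_psd_nonneg hRpsd (tensorPow_posSemidef hρ.1)
      exact (Complex.nonneg_iff.mp h7).1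
    have hPΘ : ∑ i, ((r i : ℂ)) ^ 2 * (P i * τ).trace = (Θ * Θ * τ).trace := by
      rw [hΘdef, hΘsq, Matrix.sum_mul, Matrix.trace_sum]
      exact Finset.sum_congr rfl fun i _ => by
        rw [Matrix.smul_mul, Matrix.trace_smul, smul_eq_mul]
    have hre1 : ∑ i, (s i) ^ 2 * ((Q i * τ).trace).re
        = ((∑ i, M i * Q i * M i) * τ).trace.re + (Θ * Θ * τ).trace.re := by
      have h8 : ∑ i, (s i) ^ 2 * ((Q i * τ).trace).re
          = (∑ i, ((s i : ℂ)) ^ 2 * (Q i * τ).trace).re := by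
        rw [Complex.re_sum]
        exact Finset.sum_congr rfl fun i _ => by
          rw [← Complex.ofReal_pow, Complex.re_ofReal_mul]
      rw [h8, hmain, Complex.add_re]
    have hre2 : ∑ i, (r i) ^ 2 * ((P i * τ).trace).re = (Θ * Θ * τ).trace.re := by
      have h9 : ∑ i, (r i) ^ 2 * ((P i * τ).trace).re
          = (∑ i, ((r i : ℂ)) ^ 2 * (P i * τ).trace).re := by
        rw [Complex.re_sum]
        exact Finset.sum_congr rfl fun i _ => by
          rw [← Complex.ofReal_pow, Complex.re_ofReal_mul]
      rw [h9, hPΘ]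
    have hineq : ∑ i, (r i) ^ 2 * ((P i * τ).trace).re
        ≤ ∑ i, (s i) ^ 2 * ((Q i * τ).trace).re := by
      rw [hre1, hre2]
      linarith
    exact sub_le_sub_right hineq _
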